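/- Let X be a connected subset of the plane ℝ² and let x ∈ B(X), where B(X) is the set of points x ∈ X such that every neighborhood of x contains a simple closed curve J ⊆ X whose bounded complementary domain (interior in ℝ²) is not contained in X. Then every homotopy H : X × [0,1] → X with H(·,0) = id_X satisfies H(x,t) = x for all t. -/

import Mathlib

set_option maxHeartbeats 1000000


open Set Function Topology

/-- The plane. -/
abbrev Plane := EuclideanSpace ℝ (Fin 2)

/-- The unit circle in ℝ². -/
abbrev Circle1 : Set Plane := Metric.sphere 0 1

/-- `J` is a simple closed curve: a homeomorphic (continuous injective,
hence embedded) image of the circle. -/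
def IsSimpleClosedCurve (J : Set Plane) : Prop :=
  ∃ e : ↥Circle1 → Plane, Continuous e ∧ Injective e ∧ range e = J

/-- The interior of a simple closed curve `J` in the plane: the union of the
bounded complementary components of `J`. -/
def sccInterior (J : Set Plane) : Set Plane :=
  {x | x ∉ J ∧ Bornology.IsBounded (connectedComponentIn Jᶜ x)}

/-- The bad set of a planar set `X`: points `x ∈ X` each of whose neighborhoods
contains a simple closed curve lying in `X` whose interior is not contained
in `X`. -/
def badSet (X : Set Plane) : Set Plane :=
  {x ∈ X | ∀ U ∈ nhds x, ∃ J : Set Plane, IsSimpleClosedCurve J ∧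
    J ⊆ U ∩ X ∧ ¬ sccInterior J ⊆ X}


/-- On a compact space, a nonvanishing continuous function has modulus bounded below. -/
lemma exists_pos_lowbound {W : Type*} [TopologicalSpace W] [CompactSpace W] [Nonempty W]
    (g : W → ℂ) (hg : Continuous g) (hne : ∀ w, g w ≠ 0) :
    ∃ ε > 0, ∀ w, ε ≤ ‖g w‖ := by
  obtain ⟨w₀, -, hw₀⟩ := isCompact_univ.exists_isMinOn univ_nonempty
    ((continuous_norm.comp hg).continuousOn (s := univ))
  refine ⟨‖g w₀‖, norm_pos_iff.mpr (hne w₀), fun w => hw₀ (mem_univ w)⟩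

/-- Transport of continuous logarithms along a homotopy of nonvanishing maps. -/
lemma log_transport {Z : Type*} [TopologicalSpace Z] [CompactSpace Z]
    (F : Z × ℝ → ℂ) (hF : Continuous F) {ε : ℝ} (hε : 0 < ε)
    (hlow : ∀ w, ε ≤ ‖F w‖)
    (h0 : ∃ θ : Z → ℂ, Continuous θ ∧ ∀ z, Complex.exp (θ z) = F (z, 0)) :
    ∃ θ : Z → ℂ, Continuous θ ∧ ∀ z, Complex.exp (θ z) = F (z, 1) := by
  have hFne : ∀ w, F w ≠ 0 := fun w h => by
    have := hlow w; rw [h] at this; simp at this; linarith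
  set A : Set ℝ := {t | ∃ θ : Z → ℂ, Continuous θ ∧ ∀ z, Complex.exp (θ z) = F (z, t)} with hA
  -- one step
  have step : ∀ s t : ℝ, (∀ z, ‖F (z, t) - F (z, s)‖ < ε) → s ∈ A → t ∈ A := by
    rintro s t hst ⟨θ, hθc, hθ⟩
    have hr : ∀ z, F (z, t) / F (z, s) ∈ Complex.slitPlane := by
      intro z
      have h1 : ‖F (z, t) / F (z, s) - 1‖ < 1 := by
        have hs0 : F (z, s) ≠ 0 := hFne _
        have : F (z, t) / F (z, s) - 1 = (F (z, t) - F (z, s)) / F (z, s) := by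
          field_simp
        have hpos : 0 < ‖F (z, s)‖ := norm_pos_iff.mpr hs0
        rw [this, norm_div, div_lt_one hpos]
        exact lt_of_lt_of_le (hst z) (hlow _)
      rw [Complex.mem_slitPlane_iff]
      left
      have h2 : (1 - (F (z, t) / F (z, s))).re ≤ ‖F (z, t) / F (z, s) - 1‖ := by
        rw [← norm_neg]; simp only [neg_sub]
        exact (Complex.re_le_norm _)
      have : (1 - (F (z, t) / F (z, s))).re = 1 - (F (z, t) / F (z, s)).re := by simp
      linarith [this ▸ h2]
    refine ⟨fun z => θ z + Complex.log (F (z, t) / F (z, s)), ?_, ?_⟩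
    · refine hθc.add ?_
      have hcont : Continuous fun z => F (z, t) / F (z, s) :=
        (hF.comp (continuous_id.prodMk continuous_const)).div
          (hF.comp (continuous_id.prodMk continuous_const)) (fun z => hFne _)
      exact hcont.clog fun z => hr z
    · intro z
      rw [Complex.exp_add, hθ z, Complex.exp_log (div_ne_zero (hFne _) (hFne _))]
      rw [mul_div_cancel₀ _ (hFne _)]
  -- tube lemma
  have tube : ∀ s : ℝ, ∃ δ > 0, ∀ t : ℝ, |t - s| < δ → ∀ z, ‖F (z, t) - F (z, s)‖ < ε := by
    intro s
    set W : Set (Z × ℝ) := {w | ‖F w - F (w.1, s)‖ < ε} with hW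
    have hWopen : IsOpen W := by
      have : Continuous fun w : Z × ℝ => ‖F w - F (w.1, s)‖ :=
        (hF.sub (hF.comp (continuous_fst.prodMk continuous_const))).norm
      exact isOpen_lt this continuous_const
    have hsub : (univ : Set Z) ×ˢ ({s} : Set ℝ) ⊆ W := by
      rintro ⟨z, t⟩ ⟨-, ht⟩
      simp only [mem_singleton_iff] at ht
      subst ht
      simp [hW, hε]
    obtain ⟨u, v, -, hvopen, hu, hv, huv⟩ :=
      generalized_tube_lemma isCompact_univ isCompact_singleton hWopen hsub
    obtain ⟨δ, hδ, hball⟩ := Metric.isOpen_iff.mp hvopen s (hv rfl)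
    refine ⟨δ, hδ, fun t ht z => ?_⟩
    have : (z, t) ∈ W := huv ⟨hu (mem_univ z), hball (by simpa [Real.dist_eq] using ht)⟩
    exact this
  have hAopen : IsOpen A := by
    rw [Metric.isOpen_iff]
    intro s hs
    obtain ⟨δ, hδ, hδ'⟩ := tube s
    exact ⟨δ, hδ, fun t ht => step s t (hδ' t (by simpa [Real.dist_eq] using ht)) hs⟩
  have hAclosed : IsClosed A := by
    rw [← isOpen_compl_iff, Metric.isOpen_iff]
    intro s hs
    obtain ⟨δ, hδ, hδ'⟩ := tube s
    refine ⟨δ, hδ, fun t ht hmem => hs ?_⟩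
    refine step t s (fun z => ?_) hmem
    rw [norm_sub_rev]
    exact hδ' t (by simpa [Real.dist_eq] using ht) z
  have : A = univ := by
    rcases h0 with ⟨θ, h1, h2⟩
    exact (isClopen_iff.mp ⟨hAclosed, hAopen⟩).resolve_left
      (Nonempty.ne_empty ⟨0, ⟨θ, h1, h2⟩⟩)
  exact (this ▸ mem_univ 1 : (1:ℝ) ∈ A)


noncomputable abbrev phi' : EuclideanSpace ℝ (Fin 2) ≃ₗᵢ[ℝ] ℂ :=
  Complex.orthonormalBasisOneI.repr.symm




/-- No continuous logarithm of the identity loop on the unit circle. -/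
lemma no_log_circle (ψ : ↥(Metric.sphere (0:EuclideanSpace ℝ (Fin 2)) 1) → ℂ)
    (hψ : Continuous ψ)
    (hexp : ∀ z, Complex.exp (ψ z) = phi' ↑z) : False := by
  have hγmem : ∀ t : ℝ, phi'.symm (Complex.exp (t * Complex.I)) ∈
      Metric.sphere (0:EuclideanSpace ℝ (Fin 2)) 1 := by
    intro t
    rw [mem_sphere_zero_iff_norm, phi'.symm.norm_map]
    simpa using Complex.abs_exp_ofReal_mul_I t
  set γ : ℝ → ↥(Metric.sphere (0:EuclideanSpace ℝ (Fin 2)) 1) :=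
    fun t => ⟨phi'.symm (Complex.exp (t * Complex.I)), hγmem t⟩ with hγ
  have hγcont : Continuous γ := by
    refine Continuous.subtype_mk ?_ _
    exact phi'.symm.continuous.comp (Complex.continuous_exp.comp (by continuity))
  set a : ℝ → ℂ := fun t => ψ (γ t) with ha
  have hacont : Continuous a := hψ.comp hγcont
  have haexp : ∀ t, Complex.exp (a t) = Complex.exp (t * Complex.I) := by
    intro t
    rw [ha]
    simp only [hexp (γ t)]
    exact phi'.apply_symm_apply _
  set d : ℝ → ℂ := fun t => (a t - t * Complex.I) / (2 * Real.pi * Complex.I) with hd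
  have h2πI : (2 * (Real.pi:ℂ) * Complex.I) ≠ 0 := by
    simp [Real.pi_ne_zero, Complex.I_ne_zero]
  have hdcont : Continuous d := ((hacont.sub (by continuity)).div_const _)
  have hdint : ∀ t, ∃ n : ℤ, d t = n := by
    intro t
    have : Complex.exp (a t - t * Complex.I) = 1 := by
      rw [Complex.exp_sub, haexp t, div_self (Complex.exp_ne_zero _)]
    obtain ⟨n, hn⟩ := Complex.exp_eq_one_iff.mp this
    exact ⟨n, by rw [hd]; simp only [hn]; field_simp⟩
  set f : ℝ → ℝ := fun t => (d t).re with hf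
  have hfcont : Continuous f := Complex.continuous_re.comp hdcont
  have hfint : ∀ t, ∃ n : ℤ, f t = n := by
    intro t; obtain ⟨n, hn⟩ := hdint t; exact ⟨n, by rw [hf]; simp [hn]⟩
  have hper : a (2 * Real.pi) = a 0 := by
    have : γ (2 * Real.pi) = γ 0 := by
      apply Subtype.ext
      simp only [hγ]
      congr 1
      rw [show ((2 * Real.pi : ℝ) : ℂ) * Complex.I = 2 * Real.pi * Complex.I by push_cast; ring]
      rw [Complex.exp_two_pi_mul_I]
      simp
    show ψ (γ (2*Real.pi)) = ψ (γ 0)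
    rw [this]
  have hkey : f (2 * Real.pi) = f 0 - 1 := by
    have : d (2 * Real.pi) = d 0 - 1 := by
      rw [hd]
      simp only [hper]
      rw [eq_sub_iff_add_eq, div_add' _ _ _ h2πI]
      congr 1
      push_cast
      ring
    show (d (2*Real.pi)).re = (d 0).re - 1
    rw [this]; simp
  have hiv := intermediate_value_Icc' (by positivity : (0:ℝ) ≤ 2 * Real.pi)
    (hfcont.continuousOn (s := Icc 0 (2*Real.pi)))
  have hvmem : f 0 - 1/2 ∈ Icc (f (2 * Real.pi)) (f 0) := by
    rw [hkey]; constructor <;> linarith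
  obtain ⟨t, -, hft⟩ := hiv hvmem
  obtain ⟨n, hn⟩ := hfint t
  obtain ⟨m, hm⟩ := hfint 0
  rw [hn, hm] at hft
  have : ((2*n : ℤ) : ℝ) = ((2*m - 1 : ℤ) : ℝ) := by push_cast; linarith
  have := Int.cast_injective (α := ℝ) this
  omega

section helpers
variable {Z : Type*} [TopologicalSpace Z] [CompactSpace Z]

lemma exists_pos_lowbound' {W : Type*} [TopologicalSpace W] [CompactSpace W] [Nonempty W]
    (g : W → ℂ) (hg : Continuous g) (hne : ∀ w, g w ≠ 0) :
    ∃ ε > 0, ∀ w, ε ≤ ‖g w‖ := by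
  obtain ⟨w₀, -, hw₀⟩ := isCompact_univ.exists_isMinOn univ_nonempty
    ((continuous_norm.comp hg).continuousOn (s := univ))
  exact ⟨‖g w₀‖, norm_pos_iff.mpr (hne w₀), fun w => hw₀ (mem_univ w)⟩

/-- Transport of continuous logarithms along a homotopy of nonvanishing maps;
interval version. -/
lemma log_transport_Icc [Nonempty Z]
    (g : Z × ↥(Set.Icc (0:ℝ) 1) → ℂ) (hg : Continuous g) (hne : ∀ w, g w ≠ 0)
    (h0 : ∃ θ : Z → ℂ, Continuous θ ∧
      ∀ z, Complex.exp (θ z) = g (z, ⟨0, by norm_num⟩)) :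
    ∃ θ : Z → ℂ, Continuous θ ∧ ∀ z, Complex.exp (θ z) = g (z, ⟨1, by norm_num⟩) := by
  classical
  set cl : ℝ → ℝ := fun t => max 0 (min 1 t) with hcl
  have hclmem : ∀ t, cl t ∈ Set.Icc (0:ℝ) 1 :=
    fun t => ⟨le_max_left _ _, max_le zero_le_one (min_le_left _ _)⟩
  have hclcont : Continuous cl := continuous_const.max (continuous_const.min continuous_id)
  set F : Z × ℝ → ℂ := fun w => g (w.1, ⟨cl w.2, hclmem w.2⟩) with hF
  have hFcont : Continuous F := by
    apply hg.comp
    exact continuous_fst.prodMk ((hclcont.comp continuous_snd).subtype_mk _)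
  obtain ⟨ε, hε, hlow⟩ := exists_pos_lowbound' g hg hne
  have hlow' : ∀ w, ε ≤ ‖F w‖ := fun w => hlow _
  have hcl0 : cl 0 = 0 := by norm_num [hcl]
  have hcl1 : cl 1 = 1 := by norm_num [hcl]
  have h0' : ∃ θ : Z → ℂ, Continuous θ ∧ ∀ z, Complex.exp (θ z) = F (z, 0) := by
    obtain ⟨θ, h1, h2⟩ := h0
    refine ⟨θ, h1, fun z => ?_⟩
    rw [h2 z, hF]
    exact congrArg (fun s => g (z, s)) (Subtype.ext hcl0.symm)
  obtain ⟨θ, h1, h2⟩ := log_transport F hFcont hε hlow' h0'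
  refine ⟨θ, h1, fun z => ?_⟩
  rw [h2 z, hF]
  exact congrArg (fun s => g (z, s)) (Subtype.ext hcl1)

end helpers

/-- Complement of a closed ball in the plane is preconnected. -/
lemma isPreconnected_compl_closedBall' (x : EuclideanSpace ℝ (Fin 2)) (r : ℝ) (hr : 0 < r) :
    IsPreconnected (Metric.closedBall x r)ᶜ := by
  have hrank : 1 < Module.rank ℝ (EuclideanSpace ℝ (Fin 2)) := by
    have h2 : Module.finrank ℝ (EuclideanSpace ℝ (Fin 2)) = 2 := finrank_euclideanSpace_fin
    have := Module.finrank_eq_rank ℝ (EuclideanSpace ℝ (Fin 2))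
    rw [h2] at this
    rw [← this]
    exact_mod_cast one_lt_two
  have hD : IsConnected ((Set.Ioi r) ×ˢ (Metric.sphere (0:EuclideanSpace ℝ (Fin 2)) 1)) :=
    IsConnected.prod isConnected_Ioi (isConnected_sphere hrank 0 zero_le_one)
  have himg : (fun w : ℝ × EuclideanSpace ℝ (Fin 2) => x + w.1 • w.2) ''
      ((Set.Ioi r) ×ˢ (Metric.sphere (0:EuclideanSpace ℝ (Fin 2)) 1))
      = (Metric.closedBall x r)ᶜ := by
    apply Set.eq_of_subset_of_subset
    · rintro z ⟨⟨s, v⟩, ⟨hs, hv⟩, rfl⟩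
      simp only [Set.mem_compl_iff, Metric.mem_closedBall, not_le]
      have hv1 : ‖v‖ = 1 := mem_sphere_zero_iff_norm.mp hv
      have : dist (x + s • v) x = s := by
        rw [dist_eq_norm, add_sub_cancel_left, norm_smul, hv1]
        simp only [mul_one]
        exact abs_of_pos (lt_trans hr hs)
      rw [this]; exact hs
    · intro z hz
      simp only [Set.mem_compl_iff, Metric.mem_closedBall, not_le] at hz
      have hpos : 0 < ‖z - x‖ := by rw [← dist_eq_norm]; linarith
      refine ⟨(‖z - x‖, ‖z - x‖⁻¹ • (z - x)), ⟨?_, ?_⟩, ?_⟩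
      · rw [Set.mem_Ioi, ← dist_eq_norm]; exact hz
      · rw [mem_sphere_zero_iff_norm, norm_smul, norm_inv, norm_norm,
          inv_mul_cancel₀ hpos.ne']
      · simp only
        rw [smul_inv_smul₀ hpos.ne', add_sub_cancel]
  rw [← himg]
  exact (hD.image _ (continuous_const.add (continuous_fst.smul continuous_snd)).continuousOn).isPreconnected


/-- Any homotopy of a connected planar set within itself starting at the
identity fixes every point of the bad set. -/
theorem stmt_12 (X : Set Plane) (hX : IsConnected X)
    (x : Plane) (hx : x ∈ badSet X) (hxX : x ∈ X)
    (H : ↥X × ↥(Set.Icc (0 : ℝ) 1) → ↥X) (hH : Continuous H)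
    (hH0 : ∀ y : ↥X, H (y, ⟨0, Set.left_mem_Icc.mpr zero_le_one⟩) = y) :
    ∀ t : ↥(Set.Icc (0 : ℝ) 1), H (⟨x, hxX⟩, t) = ⟨x, hxX⟩ := by
  classical
  by_contra hcon
  push_neg at hcon
  obtain ⟨t₀, ht₀⟩ := hcon
  obtain ⟨-, hxbad⟩ := hx
  set y : EuclideanSpace ℝ (Fin 2) := ↑(H (⟨x, hxX⟩, t₀)) with hy
  have hyx : y ≠ x := fun h => ht₀ (Subtype.ext h)
  set δ : ℝ := dist y x / 4 with hδdef
  have hδ : 0 < δ := by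
    have := dist_pos.mpr hyx
    positivity
  -- continuity of the time-t₀ map at x
  set k : ↥X → EuclideanSpace ℝ (Fin 2) := fun w => ↑(H (w, t₀)) with hk
  have hkcont : Continuous k :=
    continuous_subtype_val.comp (hH.comp (continuous_id.prodMk continuous_const))
  obtain ⟨ε, hε, hεball⟩ := Metric.continuousAt_iff.mp (hkcont.continuousAt (x := ⟨x, hxX⟩)) δ hδ
  set ε' : ℝ := min ε δ with hε'def
  have hε' : 0 < ε' := lt_min hε hδ
  -- get a bad simple closed curve inside the ε'-ball
  obtain ⟨J, ⟨e, he_cont, he_inj, he_range⟩, hJU, hJint⟩ :=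
    hxbad (Metric.ball x ε') (Metric.ball_mem_nhds x hε')
  have hJX : J ⊆ X := hJU.trans Set.inter_subset_right
  have hJball : J ⊆ Metric.ball x ε' := hJU.trans Set.inter_subset_left
  obtain ⟨p, hpint, hpX⟩ := Set.not_subset.mp hJint
  obtain ⟨hpJ, hKbdd⟩ := hpint
  set K : Set (EuclideanSpace ℝ (Fin 2)) := connectedComponentIn Jᶜ p with hK
  haveI : Nonempty ↥(Metric.sphere (0:EuclideanSpace ℝ (Fin 2)) 1) :=
    ⟨⟨EuclideanSpace.single 0 1, by
      simp [mem_sphere_zero_iff_norm, EuclideanSpace.norm_single]⟩⟩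
  have hJcompact : IsCompact J := he_range ▸ isCompact_range he_cont
  have hJclosed : IsClosed J := hJcompact.isClosed
  have hKopen : IsOpen K := hJclosed.isOpen_compl.connectedComponentIn
  have hpK : p ∈ K := mem_connectedComponentIn hpJ
  -- K lies inside the closed ball of radius ε'
  have hKsub : K ⊆ Metric.closedBall x ε' := by
    by_contra hsub
    obtain ⟨w, hwK, hwB⟩ := Set.not_subset.mp hsub
    have hCJ : (Metric.closedBall x ε')ᶜ ⊆ Jᶜ := by
      intro z hz hzJ
      exact hz (Metric.ball_subset_closedBall (hJball hzJ))
    have hCK : (Metric.closedBall x ε')ᶜ ⊆ K := by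
      have h1 := (isPreconnected_compl_closedBall' x ε' hε').subset_connectedComponentIn hwB hCJ
      rwa [← connectedComponentIn_eq (hwK : w ∈ connectedComponentIn Jᶜ p)] at h1
    obtain ⟨r, hr⟩ := (hKbdd.subset hCK).subset_closedBall x
    set c : ℝ := max r ε' + 1 with hc
    have hcpos : 0 < c := by
      have : ε' ≤ max r ε' := le_max_right _ _
      linarith
    set v : EuclideanSpace ℝ (Fin 2) := x + c • EuclideanSpace.single 0 1 with hv
    have hdist : dist v x = c := by
      rw [hv, dist_eq_norm, add_sub_cancel_left, norm_smul, EuclideanSpace.norm_single]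
      simp [abs_of_pos hcpos]
    have hvC : v ∈ (Metric.closedBall x ε')ᶜ := by
      simp only [Set.mem_compl_iff, Metric.mem_closedBall, not_le, hdist]
      have : ε' ≤ max r ε' := le_max_right _ _
      linarith
    have hmem := Metric.mem_closedBall.mp (hr hvC)
    rw [hdist, hc] at hmem
    have hrr : r ≤ max r ε' := le_max_left _ _
    linarith
  have hpx : dist p x ≤ ε' := Metric.mem_closedBall.mp (hKsub hpK)
  have hε'δ : ε' ≤ δ := min_le_right _ _
  -- setup in ℂ
  set q : ℂ := phi' p with hq
  set w₀ : ℂ := phi' y with hw₀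
  have hyp3δ : 3 * δ ≤ dist y p := by
    have h1 : dist y x ≤ dist y p + dist p x := dist_triangle y p x
    have : dist y x = 4 * δ := by rw [hδdef]; ring
    linarith
  have heJ : ∀ z : ↥Circle1, e z ∈ J := fun z => he_range ▸ mem_range_self z
  set e' : ↥Circle1 → ↥X := fun z => ⟨e z, hJX (heJ z)⟩ with he'
  have he'cont : Continuous e' := he_cont.subtype_mk _
  set ζ : ↥Circle1 → ℂ := fun z => phi' (k (e' z)) with hζ
  have hζcont : Continuous ζ := phi'.continuous.comp (hkcont.comp he'cont)
  have hζclose : ∀ z, ‖ζ z - w₀‖ < δ := by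
    intro z
    have h1 : dist (e z : EuclideanSpace ℝ (Fin 2)) x < ε' :=
      Metric.mem_ball.mp (hJball (heJ z))
    have h2 : dist (e' z) (⟨x, hxX⟩ : ↥X) < ε := by
      rw [Subtype.dist_eq]
      exact lt_of_lt_of_le h1 (min_le_left _ _)
    have h3 := hεball h2
    rw [← dist_eq_norm]
    show dist (phi' (k (e' z))) (phi' y) < δ
    rw [phi'.dist_map]
    exact h3
  -- Homotopy 1 : from the constant w₀ to ζ, within the ball around w₀, far from q
  have hwq : 3 * δ ≤ ‖w₀ - q‖ := by
    rw [hw₀, hq, ← dist_eq_norm, phi'.dist_map]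
    exact hyp3δ
  set g₁ : ↥Circle1 × ↥(Set.Icc (0:ℝ) 1) → ℂ :=
    fun w => ((1 - (w.2 : ℝ)) • w₀ + (w.2 : ℝ) • ζ w.1) - q with hg₁
  have hg₁cont : Continuous g₁ := by
    apply Continuous.sub _ continuous_const
    apply Continuous.add
    · exact (continuous_const.sub
        (continuous_subtype_val.comp continuous_snd)).smul continuous_const
    · exact (continuous_subtype_val.comp continuous_snd).smul (hζcont.comp continuous_fst)
  have hg₁low : ∀ w, 2 * δ ≤ ‖g₁ w‖ := by
    rintro ⟨z, t⟩
    have ht0 : (0:ℝ) ≤ t := t.2.1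
    have ht1 : (t:ℝ) ≤ 1 := t.2.2
    have hmw : ((1 - (t:ℝ)) • w₀ + (t:ℝ) • ζ z) - w₀ = (t:ℝ) • (ζ z - w₀) := by
      rw [smul_sub]
      module
    have h1 : ‖((1 - (t:ℝ)) • w₀ + (t:ℝ) • ζ z) - w₀‖ < δ := by
      rw [hmw, norm_smul, Real.norm_eq_abs, abs_of_nonneg ht0]
      calc (t:ℝ) * ‖ζ z - w₀‖ ≤ 1 * ‖ζ z - w₀‖ := by
            apply mul_le_mul_of_nonneg_right ht1 (norm_nonneg _)
        _ < δ := by rw [one_mul]; exact hζclose z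
    have h2 := dist_triangle w₀ (((1 - (t:ℝ)) • w₀ + (t:ℝ) • ζ z)) q
    rw [dist_eq_norm, dist_eq_norm, dist_eq_norm] at h2
    show 2 * δ ≤ ‖(((1 - (t:ℝ)) • w₀ + (t:ℝ) • ζ z)) - q‖
    linarith [norm_sub_rev w₀ (((1 - (t:ℝ)) • w₀ + (t:ℝ) • ζ z))]
  have hg₁ne : ∀ w, g₁ w ≠ 0 := by
    intro w hw
    have := hg₁low w
    rw [hw, norm_zero] at this
    linarith
  have hθ₁ : ∃ θ : ↥Circle1 → ℂ, Continuous θ ∧ ∀ z, Complex.exp (θ z) = ζ z - q := by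
    obtain ⟨θ, h1, h2⟩ := log_transport_Icc g₁ hg₁cont hg₁ne
      ⟨fun _ => Complex.log (w₀ - q), continuous_const, fun z => by
        have hne : w₀ - q ≠ 0 := by
          intro h
          have := hwq
          rw [h, norm_zero] at this
          linarith
        rw [Complex.exp_log hne, hg₁]
        norm_num⟩
    refine ⟨θ, h1, fun z => ?_⟩
    rw [h2 z, hg₁]
    norm_num
  -- Homotopy 2 : from ζ back to φ ∘ e, within X, avoiding p
  set σ : ↥(Set.Icc (0:ℝ) 1) → ↥(Set.Icc (0:ℝ) 1) :=
    fun s => ⟨(1 - (s:ℝ)) * (t₀:ℝ), by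
      constructor
      · exact mul_nonneg (by linarith [s.2.2]) t₀.2.1
      · exact mul_le_one₀ (by linarith [s.2.1]) t₀.2.1 t₀.2.2⟩ with hσ
  have hσcont : Continuous σ :=
    ((continuous_const.sub continuous_subtype_val).mul continuous_const).subtype_mk _
  set g₂ : ↥Circle1 × ↥(Set.Icc (0:ℝ) 1) → ℂ :=
    fun w => phi' ↑(H (e' w.1, σ w.2)) - q with hg₂
  have hg₂cont : Continuous g₂ := by
    apply Continuous.sub _ continuous_const
    exact phi'.continuous.comp (continuous_subtype_val.comp
      (hH.comp ((he'cont.comp continuous_fst).prodMk (hσcont.comp continuous_snd))))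
  have hg₂ne : ∀ w, g₂ w ≠ 0 := by
    rintro ⟨z, s⟩ hw
    rw [hg₂, sub_eq_zero] at hw
    have : (↑(H (e' z, σ s)) : EuclideanSpace ℝ (Fin 2)) = p := phi'.injective hw
    exact hpX (this ▸ (H (e' z, σ s)).2)
  have hθ₂ : ∃ θ : ↥Circle1 → ℂ, Continuous θ ∧ ∀ z, Complex.exp (θ z) = phi' (e z) - q := by
    obtain ⟨θ₁, hθ₁cont, hθ₁exp⟩ := hθ₁
    obtain ⟨θ, h1, h2⟩ := log_transport_Icc g₂ hg₂cont hg₂ne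
      ⟨θ₁, hθ₁cont, fun z => by
        have hσ0 : σ ⟨0, by norm_num⟩ = t₀ := Subtype.ext (by simp [hσ])
        rw [hθ₁exp z]
        show phi' (k (e' z)) - q = phi' (↑(H (e' z, σ ⟨0, by norm_num⟩))) - q
        rw [hσ0]⟩
    refine ⟨θ, h1, fun z => ?_⟩
    rw [h2 z]
    have hσ1 : σ ⟨1, by norm_num⟩ = ⟨0, Set.left_mem_Icc.mpr zero_le_one⟩ :=
      Subtype.ext (by simp [hσ])
    show phi' (↑(H (e' z, σ ⟨1, by norm_num⟩))) - q = phi' (e z) - q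
    rw [hσ1, hH0 (e' z)]
  obtain ⟨θ₂, hθ₂cont, hθ₂exp⟩ := hθ₂
  -- transfer the logarithm to J and extend over the plane via Tietze
  set e'' : ↥Circle1 ≃ ↥J := Equiv.ofBijective (fun z => ⟨e z, heJ z⟩)
    ⟨fun a b h => he_inj (congrArg Subtype.val h), by
      rintro ⟨j, hj⟩
      rw [← he_range] at hj
      obtain ⟨z, hz⟩ := hj
      exact ⟨z, Subtype.ext hz⟩⟩ with he''
  have he''cont : Continuous e'' := he_cont.subtype_mk _
  set homeo : ↥Circle1 ≃ₜ ↥J := he''cont.homeoOfEquivCompactToT2 with hhomeo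
  set θJ : C(↥J, ℂ) := ⟨θ₂ ∘ homeo.symm, hθ₂cont.comp homeo.symm.continuous⟩ with hθJ
  have hθJexp : ∀ j : ↥J, Complex.exp (θJ j) = phi' ↑j - q := by
    intro j
    have h1 : Complex.exp (θ₂ (homeo.symm j)) = phi' (e (homeo.symm j)) - q :=
      hθ₂exp (homeo.symm j)
    have h2 : e (homeo.symm j) = ↑j := by
      have := homeo.apply_symm_apply j
      have h3 : (↑(homeo (homeo.symm j)) : EuclideanSpace ℝ (Fin 2)) = ↑j :=
        congrArg Subtype.val this
      exact h3
    rw [hθJ]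
    simp only [ContinuousMap.coe_mk, comp_apply]
    rw [h1, h2]
  obtain ⟨θhat, hθhat⟩ := ContinuousMap.exists_restrict_eq hJclosed θJ
  have hθhatJ : ∀ j : ↥J, θhat ↑j = θJ j := by
    intro j
    rw [← hθhat]
    rfl
  -- build the global map G
  set fmap : EuclideanSpace ℝ (Fin 2) → EuclideanSpace ℝ (Fin 2) :=
    fun z => phi'.symm (q + Complex.exp (θhat z)) with hfmap
  have hfmapcont : Continuous fmap :=
    phi'.symm.continuous.comp (continuous_const.add (Complex.continuous_exp.comp θhat.continuous))
  have hfrontier : frontier K ⊆ J := by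
    intro w hw
    by_contra hwJ
    rw [hKopen.frontier_eq] at hw
    obtain ⟨hwcl, hwK⟩ := hw
    set Kw := connectedComponentIn Jᶜ w with hKw
    have hKwopen : IsOpen Kw := hJclosed.isOpen_compl.connectedComponentIn
    have hwKw : w ∈ Kw := mem_connectedComponentIn hwJ
    obtain ⟨u, huKw, huK⟩ := _root_.mem_closure_iff.mp hwcl Kw hKwopen hwKw
    have h1 : Kw = connectedComponentIn Jᶜ u := connectedComponentIn_eq huKw
    have h2 : K = connectedComponentIn Jᶜ u := connectedComponentIn_eq huK
    exact hwK (h2 ▸ h1 ▸ hwKw)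
  set G : EuclideanSpace ℝ (Fin 2) → EuclideanSpace ℝ (Fin 2) :=
    K.piecewise fmap id with hG
  have hGcont : Continuous G := by
    apply Continuous.piecewise _ hfmapcont continuous_id
    intro a ha
    have haJ : a ∈ J := hfrontier ha
    have : θhat a = θJ ⟨a, haJ⟩ := hθhatJ ⟨a, haJ⟩
    rw [hfmap]
    simp only [id_eq]
    rw [this, hθJexp ⟨a, haJ⟩]
    simp only
    rw [add_sub_cancel]
    exact phi'.symm_apply_apply a
  have hGne : ∀ z, G z ≠ p := by
    intro z hz
    by_cases hzK : z ∈ K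
    · rw [hG, Set.piecewise_eq_of_mem _ _ _ hzK, hfmap] at hz
      have : q + Complex.exp (θhat z) = phi' p := by
        rw [← hz]
        exact (phi'.apply_symm_apply _).symm
      rw [← hq] at this
      have : Complex.exp (θhat z) = 0 := by linear_combination this
      exact Complex.exp_ne_zero _ this
    · rw [hG, Set.piecewise_eq_of_notMem _ _ _ hzK] at hz
      simp only [id_eq] at hz
      exact hzK (hz.symm ▸ hpK)
  have hGid : ∀ z, z ∉ Metric.closedBall x ε' → G z = z := by
    intro z hz
    rw [hG, Set.piecewise_eq_of_notMem _ _ _ (fun h => hz (hKsub h))]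
    rfl
  -- Homotopy 3 : contract the big circle around p to the point p, avoiding p. Contradiction.
  set R : ℝ := dist p x + ε' + 1 with hR
  have hRpos : 0 < R := by positivity
  set g₃ : ↥Circle1 × ↥(Set.Icc (0:ℝ) 1) → ℂ :=
    fun w => phi' (G (p + ((w.2 : ℝ) * R) • (w.1 : EuclideanSpace ℝ (Fin 2)))) - q with hg₃
  have hg₃cont : Continuous g₃ := by
    apply Continuous.sub _ continuous_const
    apply phi'.continuous.comp
    apply hGcont.comp
    apply continuous_const.add
    exact ((continuous_subtype_val.comp continuous_snd).mul continuous_const).smul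
      (continuous_subtype_val.comp continuous_fst)
  have hg₃ne : ∀ w, g₃ w ≠ 0 := by
    intro w hw
    rw [hg₃, sub_eq_zero, hq] at hw
    exact hGne _ (phi'.injective hw)
  have hθ₃ : ∃ θ : ↥Circle1 → ℂ, Continuous θ ∧
      ∀ z : ↥Circle1, Complex.exp (θ z) = phi' (G (p + R • (z : EuclideanSpace ℝ (Fin 2)))) - q := by
    obtain ⟨θ, h1, h2⟩ := log_transport_Icc g₃ hg₃cont hg₃ne
      ⟨fun _ => Complex.log (phi' (G p) - q), continuous_const, fun z => by
        have hne : phi' (G p) - q ≠ 0 := by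
          intro h
          rw [sub_eq_zero, hq] at h
          exact hGne p (phi'.injective h)
        rw [Complex.exp_log hne, hg₃]
        norm_num⟩
    refine ⟨θ, h1, fun z => ?_⟩
    rw [h2 z, hg₃]
    norm_num
  obtain ⟨θ₃, hθ₃cont, hθ₃exp⟩ := hθ₃
  -- evaluate: on the big circle, G is the identity
  have hfar : ∀ z : ↥Circle1, p + R • (z : EuclideanSpace ℝ (Fin 2)) ∉ Metric.closedBall x ε' := by
    intro z hmem
    have hz1 : ‖(z : EuclideanSpace ℝ (Fin 2))‖ = 1 := mem_sphere_zero_iff_norm.mp z.2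
    have h1 : dist (p + R • (z : EuclideanSpace ℝ (Fin 2))) p = R := by
      rw [dist_eq_norm, add_sub_cancel_left, norm_smul, hz1, mul_one, Real.norm_eq_abs,
        abs_of_pos hRpos]
    have h2 : dist (p + R • (z : EuclideanSpace ℝ (Fin 2))) x ≤ ε' :=
      Metric.mem_closedBall.mp hmem
    have h3 := dist_triangle (p + R • (z : EuclideanSpace ℝ (Fin 2))) x p
    rw [h1] at h3
    have h4 : dist x p = dist p x := dist_comm x p
    rw [hR] at h3
    linarith [h3, h4 ▸ h3]
  have hθ₃exp' : ∀ z : ↥Circle1, Complex.exp (θ₃ z) = (R : ℂ) * phi' (z : EuclideanSpace ℝ (Fin 2)) := by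
    intro z
    rw [hθ₃exp z, hGid _ (hfar z), map_add, map_smul, hq]
    rw [Complex.real_smul]
    ring
  -- final contradiction
  apply no_log_circle (fun z => θ₃ z - Complex.log (R : ℂ))
    (hθ₃cont.sub continuous_const)
  intro z
  have hR' : (R:ℂ) ≠ 0 := by exact_mod_cast hRpos.ne'
  rw [Complex.exp_sub, hθ₃exp' z, Complex.exp_log hR', mul_comm, mul_div_assoc, div_self hR',
    mul_one]
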